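/- In the setup below, the following identity of formal power series holds in ℤ[[t]]: det(id − t·τ_+^{-1}) = det(id − t·(τ_0|_{V_0})^{-1}) · ( g + t + Σ_{k≥0} (1 − g + Σ_{ℓ=0}^{k−1} ⟨e, τ_0^ℓ(e)⟩) t^k ). Equivalently, the quotient det(1 − τ_+^{-1}t)/det(1 − τ_0|_{V_0}^{-1}t) equals the Hilbert–Poincaré series P_{(V_0,e)}(t) := Σ_{k≥0} (1 − g + Σ_{ℓ=0}^{k−1} ⟨e, τ_0^ℓ(e)⟩) t^k plus g + t. -/

import Mathlib

/-- The reflection `s_a(v) = v + ⟨v,a⟩a` in a root `a`. -/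
def sRefl {V : Type*} [AddCommGroup V] [Module ℤ V]
    (B : V →ₗ[ℤ] V →ₗ[ℤ] ℤ) (a x : V) : V :=
  x + B x a • a

/-- The Eichler–Siegel transformation
`ψ_{u,e}(x) = x + ⟨x,u⟩e − ⟨x,e⟩u − ½⟨e,e⟩⟨x,u⟩u`. -/
def esT {V : Type*} [AddCommGroup V] [Module ℤ V]
    (B : V →ₗ[ℤ] V →ₗ[ℤ] ℤ) (u e x : V) : V :=
  x + B x u • e - B x e • u - (B e e / 2 * B x u) • u

/-- The determinant of the endomorphism `id − t·f` of `ℤ[[t]] ⊗ V`, computed via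
the matrix of `f` in the basis `b`, as an element of `ℤ[[t]]`. -/
noncomputable def detOneSubT {ι V : Type*} [Fintype ι] [DecidableEq ι]
    [AddCommGroup V] [Module ℤ V] (b : Module.Basis ι ℤ V) (f : V →ₗ[ℤ] V) :
    PowerSeries ℤ :=
  Matrix.det
    (1 - (PowerSeries.X : PowerSeries ℤ) •
      (LinearMap.toMatrix b b f).map ((PowerSeries.C (R := ℤ))))

private lemma foldrPred {α : Type*} (P : (α → α) → Prop) (Pid : P id)
    (Pc : ∀ f g, P f → P g → P (f ∘ g)) :
    ∀ (l : List (α → α)), (∀ f ∈ l, P f) → P (l.foldr (· ∘ ·) id)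
  | [], _ => Pid
  | f :: l, h => Pc f _ (h f (by simp))
      (foldrPred P Pid Pc l fun g hg => h g (by simp [hg]))

private lemma bilL {V : Type*} [AddCommGroup V] [Module ℤ V]
    (B : V →ₗ[ℤ] V →ₗ[ℤ] ℤ) (p : ℤ) (x y : V) : B (p • x) y = p * B x y := by
  have h1 : B (p • x) = p • B x := map_zsmul B p x
  rw [h1]
  have h2 : (p • B x) y = p • (B x) y := map_zsmul (LinearMap.applyₗ y) p (B x)
  rw [h2, smul_eq_mul]

private lemma bilR {V : Type*} [AddCommGroup V] [Module ℤ V]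
    (B : V →ₗ[ℤ] V →ₗ[ℤ] ℤ) (p : ℤ) (x y : V) : B x (p • y) = p * B x y := by
  rw [map_zsmul (B x) p y, smul_eq_mul]

private lemma mapSmulInt {V W : Type*} [AddCommGroup V] [Module ℤ V]
    [AddCommGroup W] [Module ℤ W] (f : V →ₗ[ℤ] W) (p : ℤ) (x : V) :
    f (p • x) = p • f x := map_zsmul f p x

private lemma reprSmul {ι V : Type*} [AddCommGroup V] [Module ℤ V]
    (b : Module.Basis ι ℤ V) (p : ℤ) (x : V) (k : ι) :
    b.repr (p • x) k = p * b.repr x k := by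
  have h1 : b.repr (p • x) = p • b.repr x := map_zsmul b.repr p x
  rw [h1]
  have h2 : (p • b.repr x) k = p • (b.repr x k) :=
    map_zsmul (Finsupp.applyAddHom k) p (b.repr x)
  rw [h2, smul_eq_mul]

/-- inverse of `A.map C - X • 1` over `ℤ[[t]]`, when `A` is invertible over `ℤ`. -/
private lemma matrixXinv {ι : Type*} [Fintype ι] [DecidableEq ι] (A Ai : Matrix ι ι ℤ)
    (h1 : A * Ai = 1) (h2 : Ai * A = 1) :
    ((A.map ((PowerSeries.C (R := ℤ))) - (PowerSeries.X : PowerSeries ℤ) • 1) *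
      (Matrix.of fun i j => PowerSeries.mk fun ℓ => (Ai ^ (ℓ + 1)) i j) = 1) ∧
    ((Matrix.of fun i j => PowerSeries.mk fun ℓ => (Ai ^ (ℓ + 1)) i j) *
      (A.map ((PowerSeries.C (R := ℤ))) - (PowerSeries.X : PowerSeries ℤ) • 1) = 1) ∧
    (Matrix.of fun i j => PowerSeries.mk fun ℓ => (Ai ^ (ℓ + 1)) i j) *
        A.map ((PowerSeries.C (R := ℤ)))
      = Matrix.of fun i j => PowerSeries.mk fun ℓ => (Ai ^ ℓ) i j := by
  set E : Matrix ι ι (PowerSeries ℤ) :=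
    Matrix.of fun i j => PowerSeries.mk fun ℓ => (Ai ^ (ℓ + 1)) i j with hE
  have hmulC : ∀ (M : Matrix ι ι ℤ) (i j : ι) (n : ℕ),
      (PowerSeries.coeff (R := ℤ) n) ((M.map ((PowerSeries.C (R := ℤ))) * E) i j) = (M * Ai ^ (n+1)) i j := by
    intro M i j n
    rw [Matrix.mul_apply, map_sum, Matrix.mul_apply]
    refine Finset.sum_congr rfl fun k _ => ?_
    rw [Matrix.map_apply, hE, Matrix.of_apply, PowerSeries.coeff_C_mul, PowerSeries.coeff_mk]
  have hmulC' : ∀ (M : Matrix ι ι ℤ) (i j : ι) (n : ℕ),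
      (PowerSeries.coeff (R := ℤ) n) ((E * M.map ((PowerSeries.C (R := ℤ)))) i j) = (Ai ^ (n+1) * M) i j := by
    intro M i j n
    rw [Matrix.mul_apply, map_sum, Matrix.mul_apply]
    refine Finset.sum_congr rfl fun k _ => ?_
    rw [Matrix.map_apply, hE, Matrix.of_apply, mul_comm, PowerSeries.coeff_C_mul,
      PowerSeries.coeff_mk, mul_comm]
  have hXE : ∀ (i j : ι) (n : ℕ), (PowerSeries.coeff (R := ℤ) n)
      ((((PowerSeries.X : PowerSeries ℤ) • (1 : Matrix ι ι (PowerSeries ℤ))) * E) i j)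
      = if n = 0 then 0 else (Ai ^ n) i j := by
    intro i j n
    rw [Matrix.smul_mul, Matrix.one_mul, Matrix.smul_apply, smul_eq_mul]
    cases n with
    | zero => simp
    | succ n => simp [hE, PowerSeries.coeff_succ_X_mul]
  have hEX : ∀ (i j : ι) (n : ℕ), (PowerSeries.coeff (R := ℤ) n)
      ((E * ((PowerSeries.X : PowerSeries ℤ) • (1 : Matrix ι ι (PowerSeries ℤ)))) i j)
      = if n = 0 then 0 else (Ai ^ n) i j := by
    intro i j n
    rw [Matrix.mul_smul, Matrix.mul_one, Matrix.smul_apply, smul_eq_mul]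
    cases n with
    | zero => simp
    | succ n => simp [hE, PowerSeries.coeff_succ_X_mul]
  have hone : ∀ (i j : ι) (n : ℕ), (PowerSeries.coeff (R := ℤ) n) ((1 : Matrix ι ι (PowerSeries ℤ)) i j)
      = if n = 0 then (1 : Matrix ι ι ℤ) i j else 0 := by
    intro i j n
    rcases eq_or_ne i j with rfl | hij
    · simp [Matrix.one_apply, PowerSeries.coeff_one]
    · simp [Matrix.one_apply_ne hij]
  refine ⟨?_, ?_, ?_⟩
  · ext i j n
    rw [Matrix.sub_mul, Matrix.sub_apply, map_sub, hmulC, hXE, hone]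
    have hAa : (A * Ai ^ (n+1)) i j = (Ai ^ n) i j := by
      rw [pow_succ', ← Matrix.mul_assoc, h1, Matrix.one_mul]
    rw [hAa]
    cases n with
    | zero => simp [Matrix.one_apply]
    | succ n => simp
  · ext i j n
    rw [Matrix.mul_sub, Matrix.sub_apply, map_sub, hmulC', hEX, hone]
    have hAa : (Ai ^ (n+1) * A) i j = (Ai ^ n) i j := by
      rw [pow_succ, Matrix.mul_assoc, h2, Matrix.mul_one]
    rw [hAa]
    cases n with
    | zero => simp [Matrix.one_apply]
    | succ n => simp
  · ext i j n
    rw [hmulC', Matrix.of_apply, PowerSeries.coeff_mk, pow_succ, Matrix.mul_assoc, h2,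
      Matrix.mul_one]

set_option maxHeartbeats 1600000 in
/-- with `V₋` an even lattice with basis `e_1, …, e_m, e` (the `e_i`
roots, `⟨e,e⟩ = 2g−2`), `V₀ = V₋ ⊕ ℤu`, `V₊ = V₋ ⊕ U`,
`τ₀ = s_{e_1} ∘ ⋯ ∘ s_{e_m} ∘ ψ_{u,e}` and `τ₊ = τ₀ ∘ s_{u−w}`, one has in `ℤ[[t]]`:
`det(id − t·τ₊⁻¹) = det(id − t·(τ₀|_{V₀})⁻¹) · (g + t + Σ_{k≥0} (1 − g + Σ_{ℓ=0}^{k−1} ⟨e, τ₀^ℓ(e)⟩) t^k)`,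
i.e. the quotient of the two determinants is `P_{(V₀,e)}(t) + g + t`. -/
theorem stmt11 {Vp V0 : Type*} [AddCommGroup Vp] [Module ℤ Vp]
    [AddCommGroup V0] [Module ℤ V0]
    (m : ℕ) (g : ℤ)
    (bp : Module.Basis ((Fin m ⊕ Unit) ⊕ Fin 2) ℤ Vp)
    (b0 : Module.Basis ((Fin m ⊕ Unit) ⊕ Unit) ℤ V0)
    (B : Vp →ₗ[ℤ] Vp →ₗ[ℤ] ℤ)
    (hsymm : ∀ x y, B x y = B y x)
    (heven : ∀ x, Even (B x x))
    (hroot : ∀ i : Fin m, B (bp (.inl (.inl i))) (bp (.inl (.inl i))) = -2)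
    (hg : B (bp (.inl (.inr ()))) (bp (.inl (.inr ()))) = 2 * g - 2)
    (huu : B (bp (.inr 0)) (bp (.inr 0)) = 0)
    (hww : B (bp (.inr 1)) (bp (.inr 1)) = 0)
    (huw : B (bp (.inr 0)) (bp (.inr 1)) = 1)
    (horth : ∀ (j : Fin m ⊕ Unit) (k : Fin 2), B (bp (.inl j)) (bp (.inr k)) = 0)
    (incl : V0 →ₗ[ℤ] Vp)
    (hincl1 : ∀ j : Fin m ⊕ Unit, incl (b0 (.inl j)) = bp (.inl j))
    (hincl2 : incl (b0 (.inr ())) = bp (.inr 0))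
    (τ0 : Vp ≃ₗ[ℤ] Vp)
    (hτ0 : ∀ x, τ0 x =
      ((List.ofFn fun i : Fin m => sRefl B (bp (.inl (.inl i)))).foldr (· ∘ ·) id)
        (esT B (bp (.inr 0)) (bp (.inl (.inr ()))) x))
    (τ00 : V0 ≃ₗ[ℤ] V0)
    (hτ00 : ∀ x : V0, incl (τ00 x) = τ0 (incl x))
    (τp : Vp ≃ₗ[ℤ] Vp)
    (hτp : ∀ x, τp x = τ0 (sRefl B (bp (.inr 0) - bp (.inr 1)) x)) :
    detOneSubT bp (τp⁻¹ : Vp ≃ₗ[ℤ] Vp).toLinearMap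
      = detOneSubT b0 (τ00⁻¹ : V0 ≃ₗ[ℤ] V0).toLinearMap *
        ((PowerSeries.mk fun k : ℕ =>
            1 - g + ∑ ℓ ∈ Finset.range k,
              B (bp (.inl (.inr ()))) ((τ0 ^ ℓ) (bp (.inl (.inr ())))))
          + (PowerSeries.C (R := ℤ)) g + PowerSeries.X) := by
  classical
  -- basic form values
  have hue : B (bp (.inr 0)) (bp (.inl (.inr ()))) = 0 := by
    rw [hsymm]; exact horth _ 0
  have heu : B (bp (.inl (.inr ()))) (bp (.inr 0)) = 0 := horth _ 0
  have hwe : B (bp (.inr 1)) (bp (.inl (.inr ()))) = 0 := by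
    rw [hsymm]; exact horth _ 1
  have hwu : B (bp (.inr 1)) (bp (.inr 0)) = 1 := by rw [hsymm]; exact huw
  have hdiv : B (bp (.inl (.inr ()))) (bp (.inl (.inr ()))) / 2 = g - 1 := by
    rw [hg]; omega
  -- ## the composite reflection map
  set Rf : Vp → Vp :=
    (List.ofFn fun i : Fin m => sRefl B (bp (.inl (.inl i)))).foldr (· ∘ ·) id with hRfdef
  have hRf_pred : ∀ (P : (Vp → Vp) → Prop), P id → (∀ f g, P f → P g → P (f ∘ g)) →
      (∀ i : Fin m, P (sRefl B (bp (.inl (.inl i))))) → P Rf := by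
    intro P hid hc hs
    refine foldrPred P hid hc _ ?_
    intro f hf
    obtain ⟨i, rfl⟩ := List.mem_ofFn.1 hf
    exact hs i
  have hRf_lin : (∀ x y, Rf (x + y) = Rf x + Rf y) ∧ (∀ (c : ℤ) x, Rf (c • x) = c • Rf x)
      ∧ Rf (bp (.inr 0)) = bp (.inr 0) ∧ Rf (bp (.inr 1)) = bp (.inr 1) := by
    refine hRf_pred (fun f => (∀ x y, f (x + y) = f x + f y) ∧ (∀ (c : ℤ) x, f (c • x) = c • f x)
        ∧ f (bp (.inr 0)) = bp (.inr 0) ∧ f (bp (.inr 1)) = bp (.inr 1))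
      ⟨fun _ _ => rfl, fun _ _ => rfl, rfl, rfl⟩ ?_ ?_
    · rintro f f' ⟨fa, fs, fu, fw⟩ ⟨ga, gs, gu, gw⟩
      exact ⟨fun x y => by simp only [Function.comp_apply, ga, fa],
        fun cc x => by simp only [Function.comp_apply, gs, fs],
        by simp only [Function.comp_apply, gu, fu],
        by simp only [Function.comp_apply, gw, fw]⟩
    · intro i
      have h0 : B (bp (.inr 0)) (bp (.inl (.inl i))) = 0 := by rw [hsymm]; exact horth _ 0
      have h1 : B (bp (.inr 1)) (bp (.inl (.inl i))) = 0 := by rw [hsymm]; exact horth _ 1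
      refine ⟨fun x y => ?_, fun cc x => ?_, ?_, ?_⟩
      · simp only [sRefl, map_add, LinearMap.add_apply, add_zsmul]
        abel
      · simp only [sRefl, bilL]
        rw [zsmul_add, mul_zsmul]
      · simp [sRefl, h0]
      · simp [sRefl, h1]
  have hRfB : ∀ x y, B (Rf x) (Rf y) = B x y := by
    refine hRf_pred (fun f => ∀ x y, B (f x) (f y) = B x y) (fun _ _ => rfl)
      (fun f f' hf hg' x y => by
        simp only [Function.comp_apply]
        rw [hf, hg']) ?_
    intro i x y
    simp only [sRefl, map_add, LinearMap.add_apply, bilL, bilR]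
    linear_combination (B x (bp (.inl (.inl i)))) * hsymm (bp (.inl (.inl i))) y
      + (B x (bp (.inl (.inl i)))) * (B y (bp (.inl (.inl i)))) * (hroot i)
  have hRfrepr : ∀ x, bp.repr (Rf x) (.inr 0) = bp.repr x (.inr 0) := by
    refine hRf_pred (fun f => ∀ x, bp.repr (f x) (.inr 0) = bp.repr x (.inr 0)) (fun _ => rfl)
      (fun f f' hf hg' x => by
        simp only [Function.comp_apply]
        rw [hf, hg']) ?_
    intro i x
    simp only [sRefl, map_add, Finsupp.add_apply, reprSmul, Module.Basis.repr_self]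
    simp [Finsupp.single_apply]
  -- ## key values of τ0
  have hτ0u : τ0 (bp (.inr 0)) = bp (.inr 0) := by
    rw [hτ0]
    have h1 : esT B (bp (.inr 0)) (bp (.inl (.inr ()))) (bp (.inr 0)) = bp (.inr 0) := by
      simp [esT, huu, hue]
    rw [h1]
    exact hRf_lin.2.2.1
  have hτ0w : τ0 (bp (.inr 1))
      = τ0 (bp (.inl (.inr ()))) + bp (.inr 1) + (g-1) • bp (.inr 0) := by
    rw [hτ0, hτ0]
    have h1 : esT B (bp (.inr 0)) (bp (.inl (.inr ()))) (bp (.inr 1))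
        = esT B (bp (.inr 0)) (bp (.inl (.inr ()))) (bp (.inl (.inr ())))
          + bp (.inr 1) + (g-1) • bp (.inr 0) := by
      simp only [esT]
      rw [hdiv, hwu, hwe, heu, hg]
      have h2 : (2*g-2) • (bp (.inr 0) : Vp)
          = (g-1) • bp (.inr 0) + (g-1) • bp (.inr 0) := by
        rw [← add_zsmul]; ring_nf
      rw [h2]
      simp only [one_zsmul, zero_zsmul, mul_one, mul_zero, sub_zero]
      abel
    rw [h1, hRf_lin.1, hRf_lin.1, hRf_lin.2.1, hRf_lin.2.2.1, hRf_lin.2.2.2]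
  have hLu : ∀ x, bp.repr (τ0 x) (.inr 0)
      = bp.repr x (.inr 0) - B x (bp (.inl (.inr ()))) - (g-1) * B x (bp (.inr 0)) := by
    intro x
    rw [hτ0, hRfrepr]
    simp only [esT, map_add, map_sub, Finsupp.add_apply, Finsupp.sub_apply,
      reprSmul, Module.Basis.repr_self, hdiv]
    simp [Finsupp.single_apply]
    try ring
  -- ## compatibility of repr with incl
  have hrep1 : ∀ (y : V0) (i : Fin m ⊕ Unit),
      bp.repr (incl y) (.inl i) = b0.repr y (.inl i) := by
    intro y i
    have h : (Finsupp.lapply (Sum.inl i) ∘ₗ (bp.repr.toLinearMap ∘ₗ incl) :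
          V0 →ₗ[ℤ] ℤ)
        = Finsupp.lapply (Sum.inl i) ∘ₗ b0.repr.toLinearMap := by
      refine Module.Basis.ext b0 ?_
      rintro (j | ⟨⟩) <;>
        simp [hincl1, hincl2, Module.Basis.repr_self, Finsupp.single_apply]
    exact DFunLike.congr_fun h y
  have hrep2 : ∀ (y : V0), bp.repr (incl y) (.inr 0) = b0.repr y (.inr ()) := by
    intro y
    have h : (Finsupp.lapply (Sum.inr 0 : (Fin m ⊕ Unit) ⊕ Fin 2) ∘ₗ
          (bp.repr.toLinearMap ∘ₗ incl) : V0 →ₗ[ℤ] ℤ)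
        = Finsupp.lapply (Sum.inr () : (Fin m ⊕ Unit) ⊕ Unit) ∘ₗ b0.repr.toLinearMap := by
      refine Module.Basis.ext b0 ?_
      rintro (j | ⟨⟩) <;>
        simp [hincl1, hincl2, Module.Basis.repr_self, Finsupp.single_apply]
    exact DFunLike.congr_fun h y
  have hrep3 : ∀ (y : V0), bp.repr (incl y) (.inr 1) = 0 := by
    intro y
    have h : (Finsupp.lapply (Sum.inr 1 : (Fin m ⊕ Unit) ⊕ Fin 2) ∘ₗ
          (bp.repr.toLinearMap ∘ₗ incl) : V0 →ₗ[ℤ] ℤ) = 0 := by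
      refine Module.Basis.ext b0 ?_
      rintro (j | ⟨⟩) <;>
        simp [hincl1, hincl2, Module.Basis.repr_self, Finsupp.single_apply]
    exact DFunLike.congr_fun h y
  have hinj : Function.Injective incl := by
    intro y y' h
    apply b0.repr.injective
    ext k
    rcases k with j | ⟨⟩
    · rw [← hrep1 y j, ← hrep1 y' j, h]
    · rw [← hrep2 y, ← hrep2 y', h]
  -- ## τ00 fixes u
  have hτ00u : τ00 (b0 (.inr ())) = b0 (.inr ()) := by
    apply hinj
    rw [hτ00, hincl2, hτ0u]
  have hτ00u' : (τ00⁻¹ : V0 ≃ₗ[ℤ] V0) (b0 (.inr ())) = b0 (.inr ()) := by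
    conv_lhs => rw [← hτ00u]
    exact τ00.symm_apply_apply _
  -- ## values of τp on the basis
  have hτp1 : ∀ j : Fin m ⊕ Unit, τp (bp (.inl j)) = incl (τ00 (b0 (.inl j))) := by
    intro j
    rw [hτp]
    have h1 : sRefl B (bp (.inr 0) - bp (.inr 1)) (bp (.inl j)) = bp (.inl j) := by
      simp [sRefl, map_sub, horth]
    rw [h1, ← hincl1 j]
    exact (hτ00 _).symm
  have hτp2 : τp (bp (.inr 0))
      = incl (τ00 (b0 (.inl (.inr ())))) + bp (.inr 1) + (g-1) • bp (.inr 0) := by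
    rw [hτp]
    have h1 : sRefl B (bp (.inr 0) - bp (.inr 1)) (bp (.inr 0)) = bp (.inr 1) := by
      simp only [sRefl, map_sub, huu, huw]
      norm_num
    rw [h1, hτ0w, ← hincl1, ← hτ00]
  have hτp3 : τp (bp (.inr 1)) = bp (.inr 0) := by
    rw [hτp]
    have h1 : sRefl B (bp (.inr 0) - bp (.inr 1)) (bp (.inr 1)) = bp (.inr 0) := by
      simp only [sRefl, map_sub, hwu, hww]
      norm_num
    rw [h1, hτ0u]
  -- ## the ℤ-matrices
  set N : Matrix ((Fin m ⊕ Unit) ⊕ Unit) ((Fin m ⊕ Unit) ⊕ Unit) ℤ :=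
    LinearMap.toMatrix b0 b0 τ00.toLinearMap with hNdef
  set N' : Matrix ((Fin m ⊕ Unit) ⊕ Unit) ((Fin m ⊕ Unit) ⊕ Unit) ℤ :=
    LinearMap.toMatrix b0 b0 (τ00⁻¹ : V0 ≃ₗ[ℤ] V0).toLinearMap with hN'def
  set Tp : Matrix ((Fin m ⊕ Unit) ⊕ Fin 2) ((Fin m ⊕ Unit) ⊕ Fin 2) ℤ :=
    LinearMap.toMatrix bp bp τp.toLinearMap with hTpdef
  set Tp' : Matrix ((Fin m ⊕ Unit) ⊕ Fin 2) ((Fin m ⊕ Unit) ⊕ Fin 2) ℤ :=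
    LinearMap.toMatrix bp bp (τp⁻¹ : Vp ≃ₗ[ℤ] Vp).toLinearMap with hTp'def
  set A : Matrix (Fin m ⊕ Unit) (Fin m ⊕ Unit) ℤ := fun i j => N (.inl i) (.inl j) with hAdef
  set Ai : Matrix (Fin m ⊕ Unit) (Fin m ⊕ Unit) ℤ := fun i j => N' (.inl i) (.inl j) with hAidef
  set c : (Fin m ⊕ Unit) → ℤ := fun j => N (.inr ()) (.inl j) with hcdef
  have hNN' : N * N' = 1 := by
    have hcomp : τ00.toLinearMap ∘ₗ (τ00⁻¹ : V0 ≃ₗ[ℤ] V0).toLinearMap = LinearMap.id := by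
      ext x; exact τ00.apply_symm_apply x
    rw [hNdef, hN'def, ← LinearMap.toMatrix_comp b0 b0 b0, hcomp, LinearMap.toMatrix_id]
  have hN'N : N' * N = 1 := by
    have hcomp : (τ00⁻¹ : V0 ≃ₗ[ℤ] V0).toLinearMap ∘ₗ τ00.toLinearMap = LinearMap.id := by
      ext x; exact τ00.symm_apply_apply x
    rw [hNdef, hN'def, ← LinearMap.toMatrix_comp b0 b0 b0, hcomp, LinearMap.toMatrix_id]
  have hT'T : Tp' * Tp = 1 := by
    have hcomp : (τp⁻¹ : Vp ≃ₗ[ℤ] Vp).toLinearMap ∘ₗ τp.toLinearMap = LinearMap.id := by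
      ext x; exact τp.symm_apply_apply x
    rw [hTpdef, hTp'def, ← LinearMap.toMatrix_comp bp bp bp, hcomp, LinearMap.toMatrix_id]
  have hN12 : ∀ i (a : Unit), N (.inl i) (.inr a) = 0 := by
    intro i a
    rw [hNdef, LinearMap.toMatrix_apply, LinearEquiv.coe_coe, hτ00u, Module.Basis.repr_self]
    simp [Finsupp.single_apply]
  have hN22 : ∀ (a b : Unit), N (.inr a) (.inr b) = 1 := by
    intro a b
    rw [hNdef, LinearMap.toMatrix_apply, LinearEquiv.coe_coe, hτ00u, Module.Basis.repr_self]
    simp [Finsupp.single_apply]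
  have hN'12 : ∀ i (a : Unit), N' (.inl i) (.inr a) = 0 := by
    intro i a
    rw [hN'def, LinearMap.toMatrix_apply, LinearEquiv.coe_coe, hτ00u', Module.Basis.repr_self]
    simp [Finsupp.single_apply]
  have hAA : A * Ai = 1 := by
    ext i j
    have h : (N * N') (.inl i) (.inl j)
        = (1 : Matrix ((Fin m ⊕ Unit) ⊕ Unit) ((Fin m ⊕ Unit) ⊕ Unit) ℤ) (.inl i) (.inl j) := by
      rw [hNN']
    rw [Matrix.mul_apply, Fintype.sum_sum_type] at h
    simp only [Fintype.sum_unique, hN12, zero_mul, add_zero] at h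
    rw [Matrix.mul_apply]
    simp only [hAdef, hAidef]
    rw [h]
    simp [Matrix.one_apply]
  have hAiA : Ai * A = 1 := by
    ext i j
    have h : (N' * N) (.inl i) (.inl j)
        = (1 : Matrix ((Fin m ⊕ Unit) ⊕ Unit) ((Fin m ⊕ Unit) ⊕ Unit) ℤ) (.inl i) (.inl j) := by
      rw [hN'N]
    rw [Matrix.mul_apply, Fintype.sum_sum_type] at h
    simp only [Fintype.sum_unique, hN'12, zero_mul, add_zero] at h
    rw [Matrix.mul_apply]
    simp only [hAdef, hAidef]
    rw [h]
    simp [Matrix.one_apply]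
  have hNpow : ∀ ℓ : ℕ, (∀ i j, (N' ^ ℓ) (.inl i) (.inl j) = (Ai ^ ℓ) i j)
      ∧ (∀ i (a : Unit), (N' ^ ℓ) (.inl i) (.inr a) = 0) := by
    intro ℓ
    induction ℓ with
    | zero =>
      constructor
      · intro i j
        simp [Matrix.one_apply]
      · intro i a
        simp [Matrix.one_apply]
    | succ ℓ ih =>
      constructor
      · intro i j
        rw [pow_succ, pow_succ, Matrix.mul_apply, Matrix.mul_apply, Fintype.sum_sum_type]
        simp only [Fintype.sum_unique, ih.2, zero_mul, add_zero]
        refine Finset.sum_congr rfl fun k _ => ?_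
        rw [ih.1]
      · intro i a
        rw [pow_succ, Matrix.mul_apply, Fintype.sum_sum_type]
        
        simp [hN'12, ih.2]
  -- c in terms of the form
  have hcB : ∀ j, c j = - B (bp (.inl j)) (bp (.inl (.inr ()))) := by
    intro j
    simp only [hcdef, hNdef]
    rw [LinearMap.toMatrix_apply, LinearEquiv.coe_coe, ← hrep2, hτ00, hincl1, hLu]
    simp [Module.Basis.repr_self, Finsupp.single_apply, horth]
  -- entries of Tp
  have hTp11 : ∀ i j, Tp (.inl i) (.inl j) = A i j := by
    intro i j
    simp only [hTpdef, hAdef, hNdef]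
    rw [LinearMap.toMatrix_apply, LinearEquiv.coe_coe, hτp1, hrep1,
      LinearMap.toMatrix_apply, LinearEquiv.coe_coe]
  have hTp21a : ∀ j, Tp (.inr 0) (.inl j) = c j := by
    intro j
    simp only [hTpdef, hcdef, hNdef]
    rw [LinearMap.toMatrix_apply, LinearEquiv.coe_coe, hτp1, hrep2,
      LinearMap.toMatrix_apply, LinearEquiv.coe_coe]
  have hTp21b : ∀ j, Tp (.inr 1) (.inl j) = 0 := by
    intro j
    simp only [hTpdef]
    rw [LinearMap.toMatrix_apply, LinearEquiv.coe_coe, hτp1, hrep3]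
  have hTp12 : ∀ i, Tp (.inl i) (.inr 0) = A i (.inr ()) := by
    intro i
    simp only [hTpdef, hAdef, hNdef]
    rw [LinearMap.toMatrix_apply, LinearEquiv.coe_coe, hτp2,
      LinearMap.toMatrix_apply, LinearEquiv.coe_coe]
    simp only [map_add, Finsupp.add_apply, reprSmul, Module.Basis.repr_self, hrep1]
    simp [Finsupp.single_apply]
  have hTp22a : Tp (.inr 0) (.inr 0) = 1 - g := by
    simp only [hTpdef]
    rw [LinearMap.toMatrix_apply, LinearEquiv.coe_coe, hτp2]
    simp only [map_add, Finsupp.add_apply, reprSmul, Module.Basis.repr_self, hrep2]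
    have h1 : b0.repr (τ00 (b0 (.inl (.inr ())))) (.inr ()) = c (.inr ()) := by
      simp only [hcdef, hNdef]
      rw [LinearMap.toMatrix_apply, LinearEquiv.coe_coe]
    rw [h1, hcB, hg]
    simp [Finsupp.single_apply]
    try ring
  have hTp22b : Tp (.inr 1) (.inr 0) = 1 := by
    simp only [hTpdef]
    rw [LinearMap.toMatrix_apply, LinearEquiv.coe_coe, hτp2]
    simp only [map_add, Finsupp.add_apply, reprSmul, Module.Basis.repr_self, hrep3]
    simp [Finsupp.single_apply]
  have hTp13 : ∀ i, Tp (.inl i) (.inr 1) = 0 := by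
    intro i
    simp only [hTpdef]
    rw [LinearMap.toMatrix_apply, LinearEquiv.coe_coe, hτp3, Module.Basis.repr_self]
    simp [Finsupp.single_apply]
  have hTp23a : Tp (.inr 0) (.inr 1) = 1 := by
    simp only [hTpdef]
    rw [LinearMap.toMatrix_apply, LinearEquiv.coe_coe, hτp3, Module.Basis.repr_self]
    simp [Finsupp.single_apply]
  have hTp23b : Tp (.inr 1) (.inr 1) = 0 := by
    simp only [hTpdef]
    rw [LinearMap.toMatrix_apply, LinearEquiv.coe_coe, hτp3, Module.Basis.repr_self]
    simp [Finsupp.single_apply]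
  -- ## the s-values
  have hiso : ∀ x y, B (τ0 x) (τ0 y) = B x y := by
    intro x y
    rw [hτ0, hτ0, hRfB]
    simp only [esT, map_add, map_sub, LinearMap.add_apply, LinearMap.sub_apply,
      bilL, bilR, hdiv]
    rw [hsymm (bp (.inl (.inr ()))) y, hsymm (bp (.inr 0)) y, huu, hue, heu, hg]
    ring
  have hisopow : ∀ (n : ℕ) x y, B ((τ0 ^ n) x) ((τ0 ^ n) y) = B x y := by
    intro n
    induction n with
    | zero => intro x y; rfl
    | succ n ih =>
      intro x y
      rw [pow_succ]
      show B ((τ0 ^ n) (τ0 x)) ((τ0 ^ n) (τ0 y)) = B x y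
      rw [ih, hiso]
  have hτ00inv : ∀ y, incl ((τ00⁻¹ : V0 ≃ₗ[ℤ] V0) y) = (τ0⁻¹ : Vp ≃ₗ[ℤ] Vp) (incl y) := by
    intro y
    have h := hτ00 ((τ00⁻¹ : V0 ≃ₗ[ℤ] V0) y)
    rw [show τ00 ((τ00⁻¹ : V0 ≃ₗ[ℤ] V0) y) = y from τ00.apply_symm_apply y] at h
    rw [h]
    exact (τ0.symm_apply_apply _).symm
  have hinvpow : ∀ (n : ℕ) (y : V0), incl (((τ00⁻¹ : V0 ≃ₗ[ℤ] V0) ^ n) y)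
      = ((τ0⁻¹ : Vp ≃ₗ[ℤ] Vp) ^ n) (incl y) := by
    intro n
    induction n with
    | zero => intro y; rfl
    | succ n ih =>
      intro y
      rw [pow_succ, pow_succ]
      show incl (((τ00⁻¹ : V0 ≃ₗ[ℤ] V0) ^ n) ((τ00⁻¹ : V0 ≃ₗ[ℤ] V0) y))
        = ((τ0⁻¹ : Vp ≃ₗ[ℤ] Vp) ^ n) ((τ0⁻¹ : Vp ≃ₗ[ℤ] Vp) (incl y))
      rw [← hτ00inv, ih]
  have hMat : ∀ n : ℕ, LinearMap.toMatrix b0 b0 ((τ00⁻¹ : V0 ≃ₗ[ℤ] V0) ^ n).toLinearMap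
      = N' ^ n := by
    intro n
    induction n with
    | zero =>
      rw [pow_zero, pow_zero]
      exact LinearMap.toMatrix_id b0
    | succ n ih =>
      rw [pow_succ, pow_succ, ← ih,
        show ((τ00⁻¹ : V0 ≃ₗ[ℤ] V0) ^ n * (τ00⁻¹ : V0 ≃ₗ[ℤ] V0)).toLinearMap
          = ((τ00⁻¹ : V0 ≃ₗ[ℤ] V0) ^ n).toLinearMap ∘ₗ (τ00⁻¹ : V0 ≃ₗ[ℤ] V0).toLinearMap
          from rfl,
        LinearMap.toMatrix_comp b0 b0 b0, ← hN'def]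
  have hBsum : ∀ y : V0, B (bp (.inl (.inr ()))) (incl y)
      = - ∑ j : Fin m ⊕ Unit, c j * (b0.repr y (.inl j)) := by
    have hBe : ∀ j : Fin m ⊕ Unit, B (bp (.inl (.inr ()))) (bp (.inl j)) = - c j := by
      intro j
      rw [hsymm, hcB j, neg_neg]
    have h : ((B (bp (.inl (.inr ())))) ∘ₗ incl : V0 →ₗ[ℤ] ℤ)
        = ∑ j : Fin m ⊕ Unit,
            (-(c j)) • ((Finsupp.lapply (Sum.inl j) : ((Fin m ⊕ Unit) ⊕ Unit →₀ ℤ) →ₗ[ℤ] ℤ)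
              ∘ₗ b0.repr.toLinearMap) := by
      refine Module.Basis.ext b0 ?_
      rintro (j0 | ⟨⟩)
      · rcases j0 with j1 | ⟨⟩ <;>
          simp [LinearMap.sum_apply, hincl1, hBe, Module.Basis.repr_self,
            Finsupp.single_apply, Finset.sum_ite_eq, smul_eq_mul]
      · simp [LinearMap.sum_apply, hincl2, heu, Module.Basis.repr_self,
          Finsupp.single_apply, smul_eq_mul]
    intro y
    have h2 := DFunLike.congr_fun h y
    simp only [LinearMap.comp_apply, LinearMap.coe_comp, Function.comp_apply,
      LinearMap.sum_apply, LinearMap.smul_apply, smul_eq_mul, neg_mul,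
      Finset.sum_neg_distrib, Finsupp.lapply_apply, LinearEquiv.coe_coe] at h2
    rw [h2]
  have hsval : ∀ ℓ : ℕ, B (bp (.inl (.inr ()))) ((τ0 ^ ℓ) (bp (.inl (.inr ()))))
      = - ∑ j : Fin m ⊕ Unit, c j * (Ai ^ ℓ) j (.inr ()) := by
    intro ℓ
    have h1 : (τ0 ^ ℓ) (((τ0⁻¹ : Vp ≃ₗ[ℤ] Vp) ^ ℓ) (bp (.inl (.inr ()))))
        = bp (.inl (.inr ())) := by
      rw [inv_pow]
      exact (τ0 ^ ℓ).apply_symm_apply _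
    calc B (bp (.inl (.inr ()))) ((τ0 ^ ℓ) (bp (.inl (.inr ()))))
        = B ((τ0 ^ ℓ) (((τ0⁻¹ : Vp ≃ₗ[ℤ] Vp) ^ ℓ) (bp (.inl (.inr ())))))
            ((τ0 ^ ℓ) (bp (.inl (.inr ())))) := by rw [h1]
      _ = B (((τ0⁻¹ : Vp ≃ₗ[ℤ] Vp) ^ ℓ) (bp (.inl (.inr ())))) (bp (.inl (.inr ()))) :=
          hisopow ℓ _ _
      _ = B (bp (.inl (.inr ()))) (((τ0⁻¹ : Vp ≃ₗ[ℤ] Vp) ^ ℓ) (bp (.inl (.inr ())))) :=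
          hsymm _ _
      _ = B (bp (.inl (.inr ())))
            (incl (((τ00⁻¹ : V0 ≃ₗ[ℤ] V0) ^ ℓ) (b0 (.inl (.inr ()))))) := by
          rw [hinvpow, hincl1]
      _ = - ∑ j : Fin m ⊕ Unit,
            c j * (b0.repr (((τ00⁻¹ : V0 ≃ₗ[ℤ] V0) ^ ℓ) (b0 (.inl (.inr ())))) (.inl j)) :=
          hBsum _
      _ = - ∑ j : Fin m ⊕ Unit, c j * (Ai ^ ℓ) j (.inr ()) := by
          congr 1
          refine Finset.sum_congr rfl fun j _ => ?_
          have h2 : b0.repr (((τ00⁻¹ : V0 ≃ₗ[ℤ] V0) ^ ℓ) (b0 (.inl (.inr ())))) (.inl j)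
              = (N' ^ ℓ) (.inl j) (.inl (.inr ())) := by
            rw [← hMat ℓ, LinearMap.toMatrix_apply, LinearEquiv.coe_coe]
          rw [h2, (hNpow ℓ).1]
  -- ## power series matrices
  set Dps : Matrix (Fin m ⊕ Unit) (Fin m ⊕ Unit) (PowerSeries ℤ) :=
    A.map ((PowerSeries.C (R := ℤ))) - (PowerSeries.X : PowerSeries ℤ) • 1 with hDpsdef
  set Eps : Matrix (Fin m ⊕ Unit) (Fin m ⊕ Unit) (PowerSeries ℤ) :=
    Matrix.of fun i j => PowerSeries.mk fun ℓ => (Ai ^ (ℓ + 1)) i j with hEpsdef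
  obtain ⟨hDE, hED, hEA⟩ := matrixXinv A Ai hAA hAiA
  set S : PowerSeries ℤ :=
    PowerSeries.mk fun ℓ => B (bp (.inl (.inr ()))) ((τ0 ^ ℓ) (bp (.inl (.inr ())))) with hSdef
  set F : PowerSeries ℤ :=
    1 + (PowerSeries.C (R := ℤ)) (1 - g) * PowerSeries.X - PowerSeries.X ^ 2
      + PowerSeries.X * S with hFdef
  set Bb : Matrix (Fin m ⊕ Unit) (Fin 2) (PowerSeries ℤ) :=
    Matrix.of fun i k => if k = 0 then (PowerSeries.C (R := ℤ)) (A i (.inr ())) else 0 with hBbdef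
  set Cb : Matrix (Fin 2) (Fin m ⊕ Unit) (PowerSeries ℤ) :=
    Matrix.of fun k j => if k = 0 then (PowerSeries.C (R := ℤ)) (c j) else 0 with hCbdef
  set Db : Matrix (Fin 2) (Fin 2) (PowerSeries ℤ) :=
    !![(PowerSeries.C (R := ℤ)) (1 - g) - PowerSeries.X, 1; 1, -PowerSeries.X] with hDbdef
  have hTpblock : Tp.map ((PowerSeries.C (R := ℤ))) - (PowerSeries.X : PowerSeries ℤ) • 1
      = Matrix.fromBlocks Dps Bb Cb Db := by
    refine Matrix.ext fun k k' => ?_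
    rcases k with i | k2 <;> rcases k' with j | k2'
    · rw [Matrix.sub_apply, Matrix.map_apply, Matrix.smul_apply, hTp11,
        Matrix.fromBlocks_apply₁₁, hDpsdef, Matrix.sub_apply, Matrix.map_apply,
        Matrix.smul_apply]
      congr 1
      rw [Matrix.one_apply, Matrix.one_apply]
      simp
    · rw [Matrix.sub_apply, Matrix.map_apply, Matrix.smul_apply, Matrix.fromBlocks_apply₁₂,
        hBbdef, Matrix.of_apply]
      fin_cases k2' <;>
        simp [hTp12, hTp13, Matrix.one_apply]
    · rw [Matrix.sub_apply, Matrix.map_apply, Matrix.smul_apply, Matrix.fromBlocks_apply₂₁,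
        hCbdef, Matrix.of_apply]
      fin_cases k2 <;>
        simp [hTp21a, hTp21b, Matrix.one_apply]
    · rw [Matrix.sub_apply, Matrix.map_apply, Matrix.smul_apply, Matrix.fromBlocks_apply₂₂,
        hDbdef]
      fin_cases k2 <;> fin_cases k2' <;>
        simp [hTp22a, hTp22b, hTp23a, hTp23b, Matrix.one_apply, map_sub, sub_eq_add_neg]
  have hEB : Eps * Bb = Matrix.of fun i k =>
      if k = 0 then (Eps * A.map ((PowerSeries.C (R := ℤ)))) i (Sum.inr ()) else 0 := by
    refine Matrix.ext fun i k => ?_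
    rw [Matrix.mul_apply, Matrix.of_apply]
    by_cases hk : k = 0
    · subst hk
      rw [if_pos rfl, Matrix.mul_apply]
      refine Finset.sum_congr rfl fun j _ => ?_
      rw [hBbdef, Matrix.of_apply, if_pos rfl, Matrix.map_apply]
    · rw [if_neg hk]
      refine Finset.sum_eq_zero fun j _ => ?_
      rw [hBbdef, Matrix.of_apply, if_neg hk, mul_zero]
  have hCEB : Cb * Eps * Bb = Matrix.of fun k k' =>
      if k = 0 ∧ k' = 0 then -S else 0 := by
    rw [Matrix.mul_assoc, hEB]
    refine Matrix.ext fun k k' => ?_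
    rw [Matrix.mul_apply, Matrix.of_apply]
    by_cases hk : k = 0
    · subst hk
      by_cases hk' : k' = 0
      · subst hk'
        have hent : ∀ j : Fin m ⊕ Unit, Cb 0 j *
            (Matrix.of fun i k =>
              if k = 0 then (Eps * A.map ((PowerSeries.C (R := ℤ)))) i (Sum.inr ()) else 0) j (0 : Fin 2)
            = (PowerSeries.C (R := ℤ)) (c j) * (Eps * A.map ((PowerSeries.C (R := ℤ)))) j (Sum.inr ()) := by
          intro j
          rw [Matrix.of_apply, if_pos rfl, hCbdef, Matrix.of_apply, if_pos rfl]
        rw [Finset.sum_congr rfl fun j _ => hent j, if_pos ⟨rfl, rfl⟩]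
        apply PowerSeries.ext
        intro n
        rw [map_sum, map_neg, hSdef, PowerSeries.coeff_mk, hsval, neg_neg]
        refine Finset.sum_congr rfl fun j _ => ?_
        rw [PowerSeries.coeff_C_mul, hEA, Matrix.of_apply, PowerSeries.coeff_mk]
      · simp only [Matrix.of_apply, if_neg hk', mul_zero, Finset.sum_const_zero]
        rw [if_neg (by simp [hk'])]
    · rw [if_neg (by simp [hk])]
      refine Finset.sum_eq_zero fun j _ => ?_
      simp [hCbdef, if_neg hk]
  have hdetTpPS : (Tp.map ((PowerSeries.C (R := ℤ))) - (PowerSeries.X : PowerSeries ℤ) • 1).det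
      = Dps.det * (-F) := by
    rw [hTpblock]
    have e21 : Cb * Eps * Dps = Cb := by rw [Matrix.mul_assoc, hED, Matrix.mul_one]
    have e22 : Cb * Eps * Bb + (Db - Cb * Eps * Bb) = Db := by abel
    have hfact : Matrix.fromBlocks Dps Bb Cb Db
        = Matrix.fromBlocks 1 0 (Cb * Eps) 1 *
          Matrix.fromBlocks Dps Bb 0 (Db - Cb * Eps * Bb) := by
      rw [Matrix.fromBlocks_multiply]
      simp only [Matrix.one_mul, Matrix.zero_mul, Matrix.mul_zero, add_zero, zero_add]
      rw [e21, e22]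
    have hS2 : Db - (Matrix.of fun k k' => if k = 0 ∧ k' = 0 then -S else 0)
        = !![(PowerSeries.C (R := ℤ)) (1 - g) - PowerSeries.X + S, 1; 1, -PowerSeries.X] := by
      refine Matrix.ext fun k k' => ?_
      fin_cases k <;> fin_cases k' <;>
        simp [hDbdef, sub_neg_eq_add, sub_eq_add_neg]
    rw [hfact, Matrix.det_mul, Matrix.det_fromBlocks_zero₁₂, Matrix.det_one, Matrix.det_one,
      one_mul, one_mul, Matrix.det_fromBlocks_zero₂₁, hCEB, hS2, Matrix.det_fin_two_of,
      hFdef]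
    ring
  have hNblock : N.map ((PowerSeries.C (R := ℤ))) - (PowerSeries.X : PowerSeries ℤ) • 1
      = Matrix.fromBlocks Dps 0
          (Matrix.of fun (_ : Unit) j => (PowerSeries.C (R := ℤ)) (c j))
          (Matrix.of fun (_ : Unit) (_ : Unit) => 1 - PowerSeries.X) := by
    refine Matrix.ext fun k k' => ?_
    rcases k with i | ⟨⟩ <;> rcases k' with j | ⟨⟩
    · rw [Matrix.sub_apply, Matrix.map_apply, Matrix.smul_apply, Matrix.fromBlocks_apply₁₁,
        hDpsdef, Matrix.sub_apply, Matrix.map_apply, Matrix.smul_apply]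
      simp only [hAdef]
      congr 1
      rw [Matrix.one_apply, Matrix.one_apply]
      simp
    · rw [Matrix.sub_apply, Matrix.map_apply, Matrix.smul_apply, Matrix.fromBlocks_apply₁₂,
        hN12]
      simp [Matrix.one_apply]
    · rw [Matrix.sub_apply, Matrix.map_apply, Matrix.smul_apply, Matrix.fromBlocks_apply₂₁,
        Matrix.of_apply]
      simp only [hcdef]
      simp [Matrix.one_apply]
    · rw [Matrix.sub_apply, Matrix.map_apply, Matrix.smul_apply, Matrix.fromBlocks_apply₂₂,
        Matrix.of_apply, hN22]
      simp [Matrix.one_apply, sub_eq_add_neg]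
  have hdetNPS : (N.map ((PowerSeries.C (R := ℤ))) - (PowerSeries.X : PowerSeries ℤ) • 1).det
      = Dps.det * (1 - PowerSeries.X) := by
    rw [hNblock, Matrix.det_fromBlocks_zero₁₂]
    congr 1
    rw [Matrix.det_unique, Matrix.of_apply]
  -- ## determinants over ℤ via constant coefficients
  have hccM : ∀ {n : Type} [Fintype n] [DecidableEq n] (M : Matrix n n ℤ),
      (PowerSeries.constantCoeff (R := ℤ))
        ((M.map ((PowerSeries.C (R := ℤ))) - (PowerSeries.X : PowerSeries ℤ) • 1).det) = M.det := by
    intro n _ _ M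
    rw [RingHom.map_det]
    congr 1
    refine Matrix.ext fun i j => ?_
    rw [RingHom.mapMatrix_apply, Matrix.map_apply, Matrix.sub_apply, Matrix.map_apply,
      Matrix.smul_apply, map_sub, PowerSeries.constantCoeff_C, smul_eq_mul]
    rcases eq_or_ne i j with rfl | hij
    · simp [Matrix.one_apply]
    · simp [Matrix.one_apply_ne hij]
  have hF0 : (PowerSeries.constantCoeff (R := ℤ)) F = 1 := by
    rw [hFdef]
    simp [PowerSeries.constantCoeff_X, pow_two]
  have hdetTp : Tp.det = - A.det := by
    have h1 := congrArg (PowerSeries.constantCoeff (R := ℤ)) hdetTpPS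
    rw [hccM] at h1
    rw [map_mul, map_neg, hF0] at h1
    have h2 : (PowerSeries.constantCoeff (R := ℤ)) Dps.det = A.det := by
      rw [hDpsdef, hccM]
    rw [h2] at h1
    rw [h1]; ring
  have hdetN : N.det = A.det := by
    have h1 := congrArg (PowerSeries.constantCoeff (R := ℤ)) hdetNPS
    rw [hccM] at h1
    rw [map_mul, map_sub, map_one, PowerSeries.constantCoeff_X, sub_zero, mul_one] at h1
    rw [h1, hDpsdef, hccM]
  have hdet' : Tp'.det = - N'.det := by
    have h1 : Tp'.det * Tp.det = 1 := by rw [← Matrix.det_mul, hT'T, Matrix.det_one]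
    have h2 : N'.det * N.det = 1 := by rw [← Matrix.det_mul, hN'N, Matrix.det_one]
    rw [hdetTp] at h1
    rw [hdetN] at h2
    linear_combination (-(N'.det)) * h1 - Tp'.det * h2
  -- ## the P series identity
  have hQF : (1 - PowerSeries.X) *
      ((PowerSeries.mk fun k : ℕ =>
            1 - g + ∑ ℓ ∈ Finset.range k,
              B (bp (.inl (.inr ()))) ((τ0 ^ ℓ) (bp (.inl (.inr ())))))
          + (PowerSeries.C (R := ℤ)) g + PowerSeries.X) = F := by
    have hcoeffInt : ∀ (n : ℕ) (a : ℤ),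
        (PowerSeries.coeff (R := ℤ) n) ((a : PowerSeries ℤ)) = if n = 0 then a else 0 := by
      intro n a
      rw [← eq_intCast ((PowerSeries.C (R := ℤ))) a, PowerSeries.coeff_C]
    apply PowerSeries.ext
    intro n
    rw [sub_mul, one_mul, map_sub]
    rcases n with _ | _ | _ | n <;>
      simp [hFdef, hSdef, Finset.sum_range_succ, PowerSeries.coeff_one, PowerSeries.coeff_X,
        PowerSeries.coeff_C, hcoeffInt, PowerSeries.coeff_X_pow, PowerSeries.coeff_succ_X_mul,
        PowerSeries.coeff_zero_X_mul, PowerSeries.coeff_mk] <;>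
      try ring
  -- ## assembly
  unfold detOneSubT
  rw [← hTp'def, ← hN'def]
  have hfac1 : (1 : Matrix ((Fin m ⊕ Unit) ⊕ Fin 2) ((Fin m ⊕ Unit) ⊕ Fin 2) (PowerSeries ℤ))
      - (PowerSeries.X : PowerSeries ℤ) • Tp'.map ((PowerSeries.C (R := ℤ)))
      = Tp'.map ((PowerSeries.C (R := ℤ))) *
        (Tp.map ((PowerSeries.C (R := ℤ))) - (PowerSeries.X : PowerSeries ℤ) • 1) := by
    rw [Matrix.mul_sub, ← Matrix.map_mul, hT'T,
      Matrix.map_one _ (map_zero _) (map_one _), Matrix.mul_smul, Matrix.mul_one]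
  have hfac2 : (1 : Matrix ((Fin m ⊕ Unit) ⊕ Unit) ((Fin m ⊕ Unit) ⊕ Unit) (PowerSeries ℤ))
      - (PowerSeries.X : PowerSeries ℤ) • N'.map ((PowerSeries.C (R := ℤ)))
      = N'.map ((PowerSeries.C (R := ℤ))) *
        (N.map ((PowerSeries.C (R := ℤ))) - (PowerSeries.X : PowerSeries ℤ) • 1) := by
    rw [Matrix.mul_sub, ← Matrix.map_mul, hN'N,
      Matrix.map_one _ (map_zero _) (map_one _), Matrix.mul_smul, Matrix.mul_one]
  rw [hfac1, hfac2, Matrix.det_mul, Matrix.det_mul, hdetTpPS, hdetNPS,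
    ← RingHom.mapMatrix_apply, ← RingHom.mapMatrix_apply, ← RingHom.map_det,
    ← RingHom.map_det, hdet', map_neg]
  linear_combination (-((PowerSeries.C (R := ℤ)) N'.det * Dps.det)) * hQF
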